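/- Let F be a satisfiable finite set of atomic comparisons over V, and let u and v be terms occurring in F. If F entails u < v, then either (a) there is a chain from u to v in F⁺ in which at least one link is strict (i.e., for some i, tᵢ < tᵢ₊₁ is in F⁺), or (b) there are two chains from u to v in F⁺ (not necessarily distinct) all of whose links are non-strict (of the form t ≤ t′ or an equality), together with a term z on the first chain and a term w on the second chain such that either z ≠ w is in F or z and w are distinct real constants. -/
import Mathlib


namespace QC

/-- A term is a variable in `V` or a real constant. -/
inductive Term (V : Type) where
  | var : V → Term V
  | const : ℝ → Term V

/-- The comparison relations `<, ≤, =, ≠`. -/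
inductive Rel where
  | lt | le | eq | ne

/-- A comparison between two terms.  (`x ≥ c` is represented as `c ≤ x`, etc.) -/
structure Comp (V : Type) where
  rel : Rel
  lhs : Term V
  rhs : Term V

def Term.eval {V : Type} (σ : V → ℝ) : Term V → ℝ
  | .var x => σ x
  | .const c => c

def Rel.holds : Rel → ℝ → ℝ → Prop
  | .lt => fun a b => a < b
  | .le => fun a b => a ≤ b
  | .eq => fun a b => a = b
  | .ne => fun a b => a ≠ b

/-- An assignment `σ : V → ℝ` satisfies a comparison. -/
def Comp.holds {V : Type} (a : Comp V) (σ : V → ℝ) : Prop :=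
  a.rel.holds (a.lhs.eval σ) (a.rhs.eval σ)

def Term.isVar {V : Type} : Term V → Prop
  | .var _ => True
  | .const _ => False

/-- An atomic comparison: at least one side is a variable. -/
def IsAC {V : Type} (a : Comp V) : Prop := a.lhs.isVar ∨ a.rhs.isVar

/-- `σ` satisfies every comparison in the finite set `F`. -/
def Sat {V : Type} (F : Finset (Comp V)) (σ : V → ℝ) : Prop := ∀ a ∈ F, a.holds σ

/-- The real constant `c` occurs in `F`. -/
def ConstOccurs {V : Type} (F : Finset (Comp V)) (c : ℝ) : Prop :=
  ∃ a ∈ F, a.lhs = Term.const c ∨ a.rhs = Term.const c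

/-- The term `t` occurs in `F`. -/
def TermOccurs {V : Type} (F : Finset (Comp V)) (t : Term V) : Prop :=
  ∃ a ∈ F, a.lhs = t ∨ a.rhs = t

/-- `F⁺`: `F` together with `c < c'` for every pair of constants `c < c'` occurring in `F`. -/
def Fplus {V : Type} (F : Finset (Comp V)) : Set (Comp V) :=
  (↑F : Set (Comp V)) ∪
    {a : Comp V | ∃ c c' : ℝ, c < c' ∧ ConstOccurs F c ∧ ConstOccurs F c' ∧
      a = ⟨Rel.lt, Term.const c, Term.const c'⟩}

/-- A chain link from `s` to `t` in `Fp`: `Fp` contains `s ≤ t`, `s < t`, or an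
equality between `s` and `t` (in either orientation). -/
def Link {V : Type} (Fp : Set (Comp V)) (s t : Term V) : Prop :=
  (⟨Rel.le, s, t⟩ : Comp V) ∈ Fp ∨ (⟨Rel.lt, s, t⟩ : Comp V) ∈ Fp ∨
  (⟨Rel.eq, s, t⟩ : Comp V) ∈ Fp ∨ (⟨Rel.eq, t, s⟩ : Comp V) ∈ Fp

/-- A non-strict chain link: `s ≤ t` or an equality between `s` and `t` (either orientation). -/
def NSLink {V : Type} (Fp : Set (Comp V)) (s t : Term V) : Prop :=
  (⟨Rel.le, s, t⟩ : Comp V) ∈ Fp ∨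
  (⟨Rel.eq, s, t⟩ : Comp V) ∈ Fp ∨ (⟨Rel.eq, t, s⟩ : Comp V) ∈ Fp

/-- `t 0, …, t n` is a chain from `u` to `v` in `Fp`. -/
def IsChainSeq {V : Type} (Fp : Set (Comp V)) (u v : Term V) (n : ℕ)
    (t : Fin (n + 1) → Term V) : Prop :=
  t 0 = u ∧ t (Fin.last n) = v ∧ ∀ i : Fin n, Link Fp (t i.castSucc) (t i.succ)

/-- There is a chain from `u` to `v` in `Fp`. -/
def ChainFrom {V : Type} (Fp : Set (Comp V)) (u v : Term V) : Prop :=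
  ∃ (n : ℕ) (t : Fin (n + 1) → Term V), IsChainSeq Fp u v n t

section ChainAux
variable {X : Type} {R : X → X → Prop}
def ChainSeq (R : X → X → Prop) (u v : X) (n : ℕ) (t : Fin (n + 1) → X) : Prop :=
  t 0 = u ∧ t (Fin.last n) = v ∧ ∀ i : Fin n, R (t i.castSucc) (t i.succ)
lemma chainSeq_single (R : X → X → Prop) (u : X) : ChainSeq R u u 0 (fun _ => u) :=
  ⟨rfl, rfl, fun i => i.elim0⟩
lemma chainSeq_snoc {u b c : X} {n : ℕ} {t : Fin (n + 1) → X}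
    (h : ChainSeq R u b n t) (hbc : R b c) :
    ChainSeq R u c (n + 1) (Fin.snoc t c) := by
  obtain ⟨h0, hl, hs⟩ := h
  refine ⟨?_, ?_, ?_⟩
  · rw [← Fin.castSucc_zero, Fin.snoc_castSucc]; exact h0
  · exact Fin.snoc_last _ _
  · intro i
    refine Fin.lastCases ?_ ?_ i
    · rw [Fin.succ_last, Fin.snoc_last, Fin.snoc_castSucc, hl]
      exact hbc
    · intro j
      rw [Fin.succ_castSucc, Fin.snoc_castSucc, Fin.snoc_castSucc]
      exact hs j
lemma chainSeq_extend {u b v : X} {n : ℕ} {t : Fin (n + 1) → X}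
    (h : ChainSeq R u b n t) (h2 : Relation.ReflTransGen R b v) :
    ∃ (m : ℕ) (hnm : n ≤ m) (s : Fin (m + 1) → X), ChainSeq R u v m s ∧
      ∀ (k : Fin (m + 1)) (hk : k.val < n + 1), s k = t ⟨k.val, hk⟩ := by
  induction h2 with
  | refl => exact ⟨n, le_rfl, t, h, fun k hk => congrArg t (Fin.ext rfl)⟩
  | tail hbc hcd ih =>
    obtain ⟨m, hm, s, hch, hpres⟩ := ih
    refine ⟨m + 1, by omega, Fin.snoc s _, chainSeq_snoc hch hcd, ?_⟩
    rintro ⟨kv, hkv⟩ hk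
    have hk' : kv < n + 1 := hk
    have hk2 : kv < m + 1 := by omega
    have he : (⟨kv, hkv⟩ : Fin (m + 2)) = Fin.castSucc ⟨kv, hk2⟩ := rfl
    conv_lhs => rw [he, Fin.snoc_castSucc]
    exact (hpres ⟨kv, hk2⟩ hk').trans (congrArg t (Fin.ext rfl))
lemma rtg_chainSeq_marked {u z v : X} (h1 : Relation.ReflTransGen R u z)
    (h2 : Relation.ReflTransGen R z v) :
    ∃ (n : ℕ) (t : Fin (n + 1) → X), ChainSeq R u v n t ∧ ∃ i, t i = z := by
  obtain ⟨m, hm, s, hch, _⟩ := chainSeq_extend (chainSeq_single R u) h1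
  obtain ⟨m', hm', s', hch', hpres⟩ := chainSeq_extend hch h2
  have hmm' : m < m' + 1 := by omega
  refine ⟨m', s', hch', ⟨m, hmm'⟩, ?_⟩
  have hmlt : ((⟨m, hmm'⟩ : Fin (m' + 1))).val < m + 1 := Nat.lt_succ_self m
  refine (hpres ⟨m, hmm'⟩ hmlt).trans ?_
  exact hch.2.1
lemma rtg_chainSeq_strict {u a b v : X} (S : X → X → Prop) (hSR : ∀ {x y}, S x y → R x y)
    (h1 : Relation.ReflTransGen R u a) (hS : S a b) (h2 : Relation.ReflTransGen R b v) :
    ∃ (n : ℕ) (t : Fin (n + 1) → X), ChainSeq R u v n t ∧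
      ∃ i : Fin n, S (t i.castSucc) (t i.succ) := by
  obtain ⟨m, hm, s, hch, _⟩ := chainSeq_extend (chainSeq_single R u) h1
  have hch2 : ChainSeq R u b (m + 1) (Fin.snoc s b) := chainSeq_snoc hch (hSR hS)
  obtain ⟨m', hm', s', hch', hpres⟩ := chainSeq_extend hch2 h2
  have hmm' : m < m' := by omega
  refine ⟨m', s', hch', ⟨m, hmm'⟩, ?_⟩
  have hm2 : m < m + 1 + 1 := by omega
  have hm3 : m + 1 < m + 1 + 1 := by omega
  have hc1 : ((⟨m, hmm'⟩ : Fin m').castSucc).val < m + 1 + 1 := hm2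
  have hc2 : ((⟨m, hmm'⟩ : Fin m').succ).val < m + 1 + 1 := hm3
  have ec := hpres ((⟨m, hmm'⟩ : Fin m').castSucc) hc1
  have es := hpres ((⟨m, hmm'⟩ : Fin m').succ) hc2
  rw [ec, es]
  have e3 : (⟨((⟨m, hmm'⟩ : Fin m').castSucc : Fin (m' + 1)).val, hc1⟩ : Fin (m + 2)) =
      Fin.castSucc (Fin.last m) := rfl
  have e4 : (⟨((⟨m, hmm'⟩ : Fin m').succ : Fin (m' + 1)).val, hc2⟩ : Fin (m + 2)) =
      Fin.last (m + 1) := rfl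
  rw [e3, e4, Fin.snoc_castSucc, Fin.snoc_last, hch.2.1]
  exact hS
end ChainAux
lemma exists_between_avoiding (Lo Hi Av : Finset ℝ) (h : ∀ p ∈ Lo, ∀ q ∈ Hi, p < q) :
    ∃ x : ℝ, (∀ p ∈ Lo, p < x) ∧ (∀ q ∈ Hi, x < q) ∧ x ∉ Av := by
  have hinf : ({x : ℝ | (∀ p ∈ Lo, p < x) ∧ ∀ q ∈ Hi, x < q}).Infinite := by
    rcases Lo.eq_empty_or_nonempty with rfl | hLo <;>
      rcases Hi.eq_empty_or_nonempty with rfl | hHi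
    · refine Set.infinite_univ.mono ?_
      intro x _
      exact ⟨fun p hp => absurd hp (Finset.notMem_empty p),
             fun q hq => absurd hq (Finset.notMem_empty q)⟩
    · refine (Set.Iio_infinite (Hi.min' hHi)).mono ?_
      intro x hx
      exact ⟨fun p hp => absurd hp (Finset.notMem_empty p),
             fun q hq => lt_of_lt_of_le hx (Hi.min'_le q hq)⟩
    · refine (Set.Ioi_infinite (Lo.max' hLo)).mono ?_
      intro x hx
      exact ⟨fun p hp => lt_of_le_of_lt (Lo.le_max' p hp) hx,
             fun q hq => absurd hq (Finset.notMem_empty q)⟩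
    · have hlt : Lo.max' hLo < Hi.min' hHi :=
        h _ (Lo.max'_mem hLo) _ (Hi.min'_mem hHi)
      refine (Set.Ioo_infinite hlt).mono ?_
      intro x hx
      exact ⟨fun p hp => lt_of_le_of_lt (Lo.le_max' p hp) hx.1,
             fun q hq => lt_of_lt_of_le hx.2 (Hi.min'_le q hq)⟩
  obtain ⟨x, hx, hxAv⟩ := hinf.exists_notMem_finset Av
  exact ⟨x, hx.1, hx.2, hxAv⟩

lemma exists_embedding {X : Type} [DecidableEq X] (P : X → X → Prop)
    (hrefl : ∀ x, P x x) (htrans : ∀ a b c, P a b → P b c → P a c)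
    (CT : Finset X) (g0 : X → ℝ)
    (h0le : ∀ s ∈ CT, ∀ t ∈ CT, P s t → g0 s ≤ g0 t)
    (h0inj : ∀ s ∈ CT, ∀ t ∈ CT, g0 s = g0 t → s = t)
    (S : Finset X) :
    ∃ g : X → ℝ, (∀ t ∈ CT, g t = g0 t) ∧
      ∀ s ∈ S ∪ CT, ∀ t ∈ S ∪ CT,
        (P s t → g s ≤ g t) ∧ (P s t → ¬ P t s → g s < g t) ∧
        (¬ P s t → ¬ P t s → g s ≠ g t) := by
  classical
  induction S using Finset.induction_on with
  | empty =>
    refine ⟨g0, fun t _ => rfl, ?_⟩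
    intro s hs t ht
    rw [Finset.empty_union] at hs ht
    refine ⟨h0le s hs t ht, ?_, ?_⟩
    · intro h1 h2
      refine lt_of_le_of_ne (h0le s hs t ht h1) fun he => h2 ?_
      have hst := h0inj s hs t ht he
      subst hst; exact hrefl s
    · intro h1 _ he
      have hst := h0inj s hs t ht he
      subst hst; exact h1 (hrefl s)
  | @insert a S haS ih =>
    obtain ⟨g, hgCT, hgp⟩ := ih
    by_cases haW : a ∈ S ∪ CT
    · have hE : insert a S ∪ CT = S ∪ CT := by
        rcases Finset.mem_union.mp haW with h | h
        · rw [Finset.insert_union, Finset.insert_eq_self.mpr (Finset.mem_union_left _ h)]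
        · rw [Finset.insert_union, Finset.insert_eq_self.mpr (Finset.mem_union_right _ h)]
      exact ⟨g, hgCT, by rw [hE]; exact hgp⟩
    · have hsplit : ∀ {x}, x ∈ insert a S ∪ CT → x = a ∨ x ∈ S ∪ CT := by
        intro x hx
        rcases Finset.mem_union.mp hx with hx | hx
        · rcases Finset.mem_insert.mp hx with h | h
          · exact Or.inl h
          · exact Or.inr (Finset.mem_union_left _ h)
        · exact Or.inr (Finset.mem_union_right _ hx)
      by_cases hm : ∃ e ∈ S ∪ CT, P e a ∧ P a e
      · obtain ⟨e, heW, hea, hae⟩ := hm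
        have hupW : ∀ {w}, w ∈ S ∪ CT → Function.update g a (g e) w = g w := by
          intro w hw
          exact Function.update_of_ne (fun h => haW (by rw [← h]; exact hw)) _ _
        refine ⟨Function.update g a (g e), ?_, ?_⟩
        · intro t ht
          rw [hupW (Finset.mem_union_right _ ht)]
          exact hgCT t ht
        · intro s hs t ht
          have hupa : Function.update g a (g e) a = g e := Function.update_self _ _ _
          rcases hsplit hs with hsa | hsW <;> rcases hsplit ht with hta | htW
          · rw [hsa, hta, hupa]
            rw [hsa] at hs; rw [hta] at ht
            exact ⟨fun _ => le_rfl, fun h1 h2 => (h2 h1).elim, fun h1 _ => (h1 (hrefl a)).elim⟩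
          · rw [hsa, hupa, hupW htW]
            exact ⟨fun h => (hgp e heW t htW).1 (htrans e a t hea h),
              fun h1 h2 => (hgp e heW t htW).2.1 (htrans e a t hea h1)
                (fun hte => h2 (htrans t e a hte hea)),
              fun h1 h2 => (hgp e heW t htW).2.2 (fun h => h1 (htrans a e t hae h))
                (fun h => h2 (htrans t e a h hea))⟩
          · rw [hta, hupa, hupW hsW]
            exact ⟨fun h => (hgp s hsW e heW).1 (htrans s a e h hae),
              fun h1 h2 => (hgp s hsW e heW).2.1 (htrans s a e h1 hae)
                (fun hes => h2 (htrans a e s hae hes)),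
              fun h1 h2 => (hgp s hsW e heW).2.2 (fun h => h1 (htrans s e a h hea))
                (fun h => h2 (htrans a e s hae h))⟩
          · rw [hupW hsW, hupW htW]; exact hgp s hsW t htW
      · push_neg at hm
        have hLoHi : ∀ p ∈ ((S ∪ CT).filter (fun w => P w a)).image g,
            ∀ q ∈ ((S ∪ CT).filter (fun w => P a w)).image g, p < q := by
          intro p hp q hq
          obtain ⟨s, hs, rfl⟩ := Finset.mem_image.mp hp
          obtain ⟨t, ht, rfl⟩ := Finset.mem_image.mp hq
          obtain ⟨hsW, hsa⟩ := Finset.mem_filter.mp hs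
          obtain ⟨htW, hat⟩ := Finset.mem_filter.mp ht
          refine (hgp s hsW t htW).2.1 (htrans s a t hsa hat) ?_
          intro hts
          exact hm t htW (htrans t s a hts hsa) hat
        obtain ⟨x, hxLo, hxHi, hxAv⟩ := exists_between_avoiding _ _ ((S ∪ CT).image g) hLoHi
        have hupW : ∀ {w}, w ∈ S ∪ CT → Function.update g a x w = g w := by
          intro w hw
          exact Function.update_of_ne (fun h => haW (by rw [← h]; exact hw)) _ _
        refine ⟨Function.update g a x, ?_, ?_⟩
        · intro t ht
          rw [hupW (Finset.mem_union_right _ ht)]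
          exact hgCT t ht
        · intro s hs t ht
          have hupa : Function.update g a x a = x := Function.update_self _ _ _
          rcases hsplit hs with hsa | hsW <;> rcases hsplit ht with hta | htW
          · rw [hsa, hta, hupa]
            exact ⟨fun _ => le_rfl, fun h1 h2 => (h2 h1).elim, fun h1 _ => (h1 (hrefl a)).elim⟩
          · rw [hsa, hupa, hupW htW]
            have hx_t : P a t → x < g t := fun h =>
              hxHi _ (Finset.mem_image.mpr ⟨t, Finset.mem_filter.mpr ⟨htW, h⟩, rfl⟩)
            exact ⟨fun h => le_of_lt (hx_t h), fun h1 _ => hx_t h1,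
              fun _ _ he => hxAv (Finset.mem_image.mpr ⟨t, htW, he.symm⟩)⟩
          · rw [hta, hupa, hupW hsW]
            have hx_s : P s a → g s < x := fun h =>
              hxLo _ (Finset.mem_image.mpr ⟨s, Finset.mem_filter.mpr ⟨hsW, h⟩, rfl⟩)
            exact ⟨fun h => le_of_lt (hx_s h), fun h1 _ => hx_s h1,
              fun _ _ he => hxAv (Finset.mem_image.mpr ⟨s, hsW, he⟩)⟩
          · rw [hupW hsW, hupW htW]; exact hgp s hsW t htW

/-- value of a constant term; `0` on variables -/
def constVal {V : Type} : Term V → ℝ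
  | .const c => c
  | .var _ => 0

/-- clause 3 of the lemma on derivations from sets of ACs:
if a satisfiable finite set `F` of atomic comparisons entails `u < v`, then either
(a) there is a chain from `u` to `v` in `F⁺` with at least one strict link, or
(b) there are two non-strict chains from `u` to `v` in `F⁺` together with a term `z`
on the first and `w` on the second such that `z ≠ w` is in `F` or `z` and `w` are
distinct real constants. -/
theorem stmt1 {V : Type} (F : Finset (Comp V))
    (hAC : ∀ a ∈ F, IsAC a)
    (hsat : ∃ σ : V → ℝ, Sat F σ)
    (u v : Term V)
    (hu : TermOccurs F u) (hv : TermOccurs F v)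
    (hent : ∀ σ : V → ℝ, Sat F σ → u.eval σ < v.eval σ) :
    (∃ (n : ℕ) (t : Fin (n + 1) → Term V), IsChainSeq (Fplus F) u v n t ∧
      ∃ i : Fin n, (⟨Rel.lt, t i.castSucc, t i.succ⟩ : Comp V) ∈ Fplus F) ∨
    (∃ (n₁ : ℕ) (t₁ : Fin (n₁ + 1) → Term V) (n₂ : ℕ) (t₂ : Fin (n₂ + 1) → Term V),
      (t₁ 0 = u ∧ t₁ (Fin.last n₁) = v ∧
        ∀ i : Fin n₁, NSLink (Fplus F) (t₁ i.castSucc) (t₁ i.succ)) ∧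
      (t₂ 0 = u ∧ t₂ (Fin.last n₂) = v ∧
        ∀ i : Fin n₂, NSLink (Fplus F) (t₂ i.castSucc) (t₂ i.succ)) ∧
      ∃ (i : Fin (n₁ + 1)) (j : Fin (n₂ + 1)),
        ((⟨Rel.ne, t₁ i, t₂ j⟩ : Comp V) ∈ F ∨
          ∃ c c' : ℝ, t₁ i = Term.const c ∧ t₂ j = Term.const c' ∧ c ≠ c')) := by
  classical
  obtain ⟨σ, hσ⟩ := hsat
  by_contra hcon
  rw [not_or] at hcon
  obtain ⟨hna, hnb⟩ := hcon
  -- semantic facts under σ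
  have hFp_holds : ∀ a ∈ Fplus F, a.holds σ := by
    intro a ha
    rcases ha with ha | ⟨c, c', hlt, -, -, rfl⟩
    · exact hσ a ha
    · exact hlt
  have hlink_le : ∀ s t : Term V, Link (Fplus F) s t → s.eval σ ≤ t.eval σ := by
    intro s t h
    rcases h with h | h | h | h
    · exact hFp_holds _ h
    · exact le_of_lt (hFp_holds _ h)
    · exact le_of_eq (hFp_holds _ h)
    · exact le_of_eq (hFp_holds _ h).symm
  have hrtg_le : ∀ {s t : Term V}, Relation.ReflTransGen (Link (Fplus F)) s t →
      s.eval σ ≤ t.eval σ := by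
    intro s t h
    induction h with
    | refl => exact le_rfl
    | tail _ h2 ih => exact le_trans ih (hlink_le _ _ h2)
  -- strict fact
  have hstrictF : ∀ s t : Term V, (⟨Rel.lt, s, t⟩ : Comp V) ∈ Fplus F →
      (Relation.ReflTransGen (Link (Fplus F)) t s ∨
        (Relation.ReflTransGen (Link (Fplus F)) t v ∧
          Relation.ReflTransGen (Link (Fplus F)) u s)) →
      False := by
    intro s t hmem h
    rcases h with h | ⟨htv, hus⟩
    · have h1 := hrtg_le h
      have h2 : s.eval σ < t.eval σ := hFp_holds _ hmem
      linarith
    · obtain ⟨n, tt, hch, i, hstr⟩ := rtg_chainSeq_strict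
        (fun a b : Term V => (⟨Rel.lt, a, b⟩ : Comp V) ∈ Fplus F)
        (fun {x y} h => Or.inr (Or.inl h)) hus hmem htv
      exact hna ⟨n, tt, hch, i, hstr⟩
  -- nonstrict chains through a marked point
  have hNSchain : ∀ z : Term V, Relation.ReflTransGen (Link (Fplus F)) u z →
      Relation.ReflTransGen (Link (Fplus F)) z v →
      ∃ (n : ℕ) (t : Fin (n + 1) → Term V),
        (t 0 = u ∧ t (Fin.last n) = v ∧
          ∀ i : Fin n, NSLink (Fplus F) (t i.castSucc) (t i.succ)) ∧
        ∃ i, t i = z := by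
    intro z h1 h2
    obtain ⟨n, t, hch, i, hi⟩ := rtg_chainSeq_marked h1 h2
    by_cases hs : ∃ j : Fin n, (⟨Rel.lt, t j.castSucc, t j.succ⟩ : Comp V) ∈ Fplus F
    · exact absurd ⟨n, t, hch, hs⟩ hna
    · push_neg at hs
      refine ⟨n, t, ⟨hch.1, hch.2.1, fun j => ?_⟩, i, hi⟩
      rcases hch.2.2 j with h | h | h | h
      · exact Or.inl h
      · exact absurd h (hs j)
      · exact Or.inr (Or.inl h)
      · exact Or.inr (Or.inr h)
  -- disequality fact
  have hneF : ∀ z w : Term V, (⟨Rel.ne, z, w⟩ : Comp V) ∈ F →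
      (Relation.ReflTransGen (Link (Fplus F)) z w ∨
        (Relation.ReflTransGen (Link (Fplus F)) z v ∧
          Relation.ReflTransGen (Link (Fplus F)) u w)) →
      (Relation.ReflTransGen (Link (Fplus F)) w z ∨
        (Relation.ReflTransGen (Link (Fplus F)) w v ∧
          Relation.ReflTransGen (Link (Fplus F)) u z)) →
      False := by
    intro z w hzw h1 h2
    have hnezw : z.eval σ ≠ w.eval σ := hσ _ hzw
    have mkb : Relation.ReflTransGen (Link (Fplus F)) u z →
        Relation.ReflTransGen (Link (Fplus F)) z v →
        Relation.ReflTransGen (Link (Fplus F)) u w →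
        Relation.ReflTransGen (Link (Fplus F)) w v → False := by
      intro huz hzv huw hwv
      obtain ⟨n₁, t₁, hch₁, i, hi⟩ := hNSchain z huz hzv
      obtain ⟨n₂, t₂, hch₂, j, hj⟩ := hNSchain w huw hwv
      exact hnb ⟨n₁, t₁, n₂, t₂, hch₁, hch₂, i, j, Or.inl (by rw [hi, hj]; exact hzw)⟩
    rcases h1 with h1 | ⟨hzv, huw⟩ <;> rcases h2 with h2 | ⟨hwv, huz⟩
    · exact hnezw (le_antisymm (hrtg_le h1) (hrtg_le h2))
    · exact mkb huz (h1.trans hwv) (huz.trans h1) hwv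
    · exact mkb (huw.trans h2) hzv huw (h2.trans hzv)
    · exact mkb huz hzv huw hwv
  -- occurring terms
  set T : Finset (Term V) := F.image Comp.lhs ∪ F.image Comp.rhs with hTdef
  have hmemT : ∀ {r : Term V}, r ∈ T ↔ TermOccurs F r := by
    intro r
    rw [hTdef]
    simp only [Finset.mem_union, Finset.mem_image, TermOccurs]
    constructor
    · rintro (⟨a, ha, rfl⟩ | ⟨a, ha, rfl⟩)
      · exact ⟨a, ha, Or.inl rfl⟩
      · exact ⟨a, ha, Or.inr rfl⟩
    · rintro ⟨a, ha, rfl | rfl⟩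
      · exact Or.inl ⟨a, ha, rfl⟩
      · exact Or.inr ⟨a, ha, rfl⟩
  have hconstOcc : ∀ c : ℝ, Term.const c ∈ T → ConstOccurs F c := fun c h => hmemT.mp h
  set CT : Finset (Term V) := T.filter (fun r => ∃ c : ℝ, r = Term.const c) with hCTdef
  -- preorder facts for the abstract embedding lemma
  have hPrefl : ∀ x : Term V,
      Relation.ReflTransGen (Link (Fplus F)) x x ∨
        (Relation.ReflTransGen (Link (Fplus F)) x v ∧
          Relation.ReflTransGen (Link (Fplus F)) u x) :=
    fun x => Or.inl Relation.ReflTransGen.refl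
  have hPtrans : ∀ a b c : Term V,
      (Relation.ReflTransGen (Link (Fplus F)) a b ∨
        (Relation.ReflTransGen (Link (Fplus F)) a v ∧
          Relation.ReflTransGen (Link (Fplus F)) u b)) →
      (Relation.ReflTransGen (Link (Fplus F)) b c ∨
        (Relation.ReflTransGen (Link (Fplus F)) b v ∧
          Relation.ReflTransGen (Link (Fplus F)) u c)) →
      (Relation.ReflTransGen (Link (Fplus F)) a c ∨
        (Relation.ReflTransGen (Link (Fplus F)) a v ∧
          Relation.ReflTransGen (Link (Fplus F)) u c)) := by
    intro a b c h1 h2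
    rcases h1 with h1 | ⟨h1a, h1b⟩ <;> rcases h2 with h2 | ⟨h2a, h2b⟩
    · exact Or.inl (h1.trans h2)
    · exact Or.inr ⟨h1.trans h2a, h2b⟩
    · exact Or.inr ⟨h1a, h1b.trans h2⟩
    · exact Or.inr ⟨h1a, h2b⟩
  -- base values on constants
  have h0le : ∀ s ∈ CT, ∀ t ∈ CT,
      (Relation.ReflTransGen (Link (Fplus F)) s t ∨
        (Relation.ReflTransGen (Link (Fplus F)) s v ∧
          Relation.ReflTransGen (Link (Fplus F)) u t)) →
      constVal s ≤ constVal t := by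
    intro s hs t ht hP
    rw [hCTdef, Finset.mem_filter] at hs ht
    obtain ⟨hsT, c, rfl⟩ := hs
    obtain ⟨htT, c', rfl⟩ := ht
    show c ≤ c'
    by_contra hcc
    push_neg at hcc
    have hmemlt : (⟨Rel.lt, Term.const c', Term.const c⟩ : Comp V) ∈ Fplus F :=
      Set.mem_union_right _ ⟨c', c, hcc, hconstOcc c' htT, hconstOcc c hsT, rfl⟩
    exact hstrictF (Term.const c') (Term.const c) hmemlt hP
  have h0inj : ∀ s ∈ CT, ∀ t ∈ CT, constVal s = constVal t → s = t := by
    intro s hs t ht he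
    rw [hCTdef, Finset.mem_filter] at hs ht
    obtain ⟨hsT, c, rfl⟩ := hs
    obtain ⟨htT, c', rfl⟩ := ht
    have : c = c' := he
    rw [this]
  obtain ⟨g, hgCT, hgp⟩ := exists_embedding
    (fun s t : Term V =>
      Relation.ReflTransGen (Link (Fplus F)) s t ∨
        (Relation.ReflTransGen (Link (Fplus F)) s v ∧
          Relation.ReflTransGen (Link (Fplus F)) u t))
    hPrefl hPtrans CT constVal h0le h0inj T
  -- the new assignment
  set σ' : V → ℝ := fun x => g (Term.var x) with hσ'def
  have heval : ∀ r ∈ T, Term.eval σ' r = g r := by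
    intro r hr
    cases r with
    | var x => rfl
    | const c =>
      show c = g (Term.const c)
      rw [hgCT _ (by rw [hCTdef, Finset.mem_filter]; exact ⟨hr, c, rfl⟩)]
      rfl
  have hSat' : Sat F σ' := by
    intro a ha
    obtain ⟨rel, s, t⟩ := a
    have hsT : s ∈ T := hmemT.mpr ⟨⟨rel, s, t⟩, ha, Or.inl rfl⟩
    have htT : t ∈ T := hmemT.mpr ⟨⟨rel, s, t⟩, ha, Or.inr rfl⟩
    have hsW : s ∈ T ∪ CT := Finset.mem_union_left _ hsT
    have htW : t ∈ T ∪ CT := Finset.mem_union_left _ htT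
    have hes := heval s hsT
    have het := heval t htT
    have haFp : (⟨rel, s, t⟩ : Comp V) ∈ Fplus F :=
      Set.mem_union_left _ (Finset.mem_coe.mpr ha)
    cases rel with
    | le =>
      show Term.eval σ' s ≤ Term.eval σ' t
      rw [hes, het]
      exact (hgp s hsW t htW).1
        (Or.inl (Relation.ReflTransGen.single (Or.inl haFp)))
    | lt =>
      show Term.eval σ' s < Term.eval σ' t
      rw [hes, het]
      exact (hgp s hsW t htW).2.1
        (Or.inl (Relation.ReflTransGen.single (Or.inr (Or.inl haFp))))
        (fun hts => (hstrictF s t haFp hts).elim)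
    | eq =>
      show Term.eval σ' s = Term.eval σ' t
      rw [hes, het]
      have h1 := (hgp s hsW t htW).1
        (Or.inl (Relation.ReflTransGen.single (Or.inr (Or.inr (Or.inl haFp)))))
      have h2 := (hgp t htW s hsW).1
        (Or.inl (Relation.ReflTransGen.single (Or.inr (Or.inr (Or.inr haFp)))))
      exact le_antisymm h1 h2
    | ne =>
      show Term.eval σ' s ≠ Term.eval σ' t
      rw [hes, het]
      by_cases h1 : Relation.ReflTransGen (Link (Fplus F)) s t ∨
          (Relation.ReflTransGen (Link (Fplus F)) s v ∧
            Relation.ReflTransGen (Link (Fplus F)) u t)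
      · by_cases h2 : Relation.ReflTransGen (Link (Fplus F)) t s ∨
            (Relation.ReflTransGen (Link (Fplus F)) t v ∧
              Relation.ReflTransGen (Link (Fplus F)) u s)
        · exact (hneF s t ha h1 h2).elim
        · exact ne_of_lt ((hgp s hsW t htW).2.1 h1 h2)
      · by_cases h2 : Relation.ReflTransGen (Link (Fplus F)) t s ∨
            (Relation.ReflTransGen (Link (Fplus F)) t v ∧
              Relation.ReflTransGen (Link (Fplus F)) u s)
        · exact ne_of_gt ((hgp t htW s hsW).2.1 h2 h1)
        · exact (hgp s hsW t htW).2.2 h1 h2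
  -- conclusion
  have huT : u ∈ T := hmemT.mpr hu
  have hvT : v ∈ T := hmemT.mpr hv
  have hvu : g v ≤ g u :=
    (hgp v (Finset.mem_union_left _ hvT) u (Finset.mem_union_left _ huT)).1
      (Or.inr ⟨Relation.ReflTransGen.refl, Relation.ReflTransGen.refl⟩)
  have hfin := hent σ' hSat'
  rw [heval u huT, heval v hvT] at hfin
  linarith


end QC
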